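/- arXiv:1209.2887 — 4 statements merged into one kernel-verified Lean document; each statement's English description precedes it below -/
import Mathlib

section
/- The injection distance d_I is a metric on the set of all subspaces of F_q^n: for all subspaces U, V, W of F_q^n one has (i) d_I(U,V) = 0 if and only if U = V, (ii) d_I(U,V) = d_I(V,U), and (iii) d_I(U,W) ≤ d_I(U,V) + d_I(V,W). -/
/-- The injection distance `d_I(U,V) = max{dim U, dim V} - dim(U ∩ V)` is a metric on the
set of all subspaces of `F_q^n`. -/
theorem injection_distance_is_metric {F : Type*} [Field F] [Fintype F] (n : ℕ)
    (dI : Submodule F (Fin n → F) → Submodule F (Fin n → F) → ℕ)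
    (hdI : ∀ U V : Submodule F (Fin n → F),
      dI U V = max (Module.finrank F ↥U) (Module.finrank F ↥V) - Module.finrank F ↥(U ⊓ V)) :
    (∀ U V : Submodule F (Fin n → F), dI U V = 0 ↔ U = V) ∧
    (∀ U V : Submodule F (Fin n → F), dI U V = dI V U) ∧
    (∀ U V W : Submodule F (Fin n → F), dI U W ≤ dI U V + dI V W) := by
  refine ⟨?_, ?_, ?_⟩
  · intro U V
    rw [hdI]
    constructor
    · intro h
      have hUV : Module.finrank F ↥(U ⊓ V) ≤ Module.finrank F ↥U :=
        Submodule.finrank_mono inf_le_left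
      have hVU : Module.finrank F ↥(U ⊓ V) ≤ Module.finrank F ↥V :=
        Submodule.finrank_mono inf_le_right
      have h1 : Module.finrank F ↥U ≤ Module.finrank F ↥(U ⊓ V) := by omega
      have h2 : Module.finrank F ↥V ≤ Module.finrank F ↥(U ⊓ V) := by omega
      have e1 : U ⊓ V = U := Submodule.eq_of_le_of_finrank_le inf_le_left h1
      have e2 : U ⊓ V = V := Submodule.eq_of_le_of_finrank_le inf_le_right h2
      rw [← e1, e2]
    · rintro rfl
      rw [max_self, inf_idem U, Nat.sub_self]
  · intro U V
    rw [hdI, hdI, inf_comm, max_comm]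
  · intro U V W
    rw [hdI, hdI, hdI]
    set a := Module.finrank F ↥U
    set b := Module.finrank F ↥V
    set c := Module.finrank F ↥W
    set x := Module.finrank F ↥(U ⊓ V)
    set y := Module.finrank F ↥(V ⊓ W)
    set z := Module.finrank F ↥(U ⊓ W)
    have hx1 : x ≤ a := Submodule.finrank_mono inf_le_left
    have hx2 : x ≤ b := Submodule.finrank_mono inf_le_right
    have hy1 : y ≤ b := Submodule.finrank_mono inf_le_left
    have hy2 : y ≤ c := Submodule.finrank_mono inf_le_right
    have key : x + y ≤ b + z := by
      have h1 : Module.finrank F ↥((U ⊓ V) ⊔ (V ⊓ W)) +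
          Module.finrank F ↥((U ⊓ V) ⊓ (V ⊓ W)) = x + y :=
        Submodule.finrank_sup_add_finrank_inf_eq _ _
      have h2 : Module.finrank F ↥((U ⊓ V) ⊔ (V ⊓ W)) ≤ b :=
        Submodule.finrank_mono (sup_le inf_le_right inf_le_left)
      have h3 : Module.finrank F ↥((U ⊓ V) ⊓ (V ⊓ W)) ≤ z := by
        apply Submodule.finrank_mono
        exact le_inf (inf_le_left.trans inf_le_left) (inf_le_right.trans inf_le_right)
      omega
    omega
end

section
/- Let U_0 be the span of the first k standard basis vectors e_1, …, e_k of F_q^n, let t ≤ k, and let M be a k×n matrix over F_q of rank k with row space V. Then d_I(U_0, V) ≤ t (equivalently dim(U_0 ∩ V) ≥ k − t) if and only if every Plücker coordinate μ_{i_1,…,i_k}(M) vanishes for all index sets 1 ≤ i_1 < … < i_k ≤ n in which fewer than k − t of the indices i_j satisfy i_j ≤ k; that is, B_t^k(U_0) is cut out inside Grass_q(k,n) by the vanishing of precisely these Plücker coordinates. -/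
open Submodule Module Matrix

/-- The ball `B_t^k(U_0)` around the row space `U_0` of `[I_k | 0]` in the Grassmannian
`Grass_q(k,n)` is cut out by the vanishing of the Plücker coordinates
`μ_{i_1,…,i_k}` for all strictly increasing index sets in which fewer than `k - t` of the
indices lie among the first `k` positions. -/
theorem ball_around_standard_subspace_in_pluecker_coordinates
    {F : Type*} [Field F] [Fintype F] (n k t : ℕ) (ht : t ≤ k) (hkn : k ≤ n)
    (U₀ : Submodule F (Fin n → F))
    (hU₀ : U₀ = Submodule.span F
      (Set.range fun i : Fin k => Pi.single (Fin.castLE hkn i) (1 : F)))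
    (M : Matrix (Fin k) (Fin n) F) (hM : M.rank = k)
    (V : Submodule F (Fin n → F)) (hV : V = Submodule.span F (Set.range M)) :
    max (Module.finrank F ↥U₀) (Module.finrank F ↥V) - Module.finrank F ↥(U₀ ⊓ V) ≤ t ↔
    ∀ ι : Fin k → Fin n, StrictMono ι →
      (Finset.univ.filter fun j : Fin k => (ι j : ℕ) < k).card < k - t →
      (M.submatrix id ι).det = 0 := by
  classical
  subst hU₀ hV
  set e : Fin k → (Fin n → F) := fun i => Pi.single (Fin.castLE hkn i) (1 : F) with he_def
  set π : (Fin n → F) →ₗ[F] ({i : Fin n // k ≤ (i : ℕ)} → F) :=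
    LinearMap.funLeft F F Subtype.val with hπ_def
  set B : Matrix (Fin k) {i : Fin n // k ≤ (i : ℕ)} F := M.submatrix id Subtype.val with hB_def
  -- linear independence of the standard vectors
  have he : LinearIndependent F e := by
    have h1 := (Pi.basisFun F (Fin n)).linearIndependent
    have h2 := h1.comp (Fin.castLE hkn) (Fin.castLE_injective hkn)
    have : (⇑(Pi.basisFun F (Fin n)) ∘ Fin.castLE hkn) = e := by
      funext i; simp [he_def, Function.comp]
    rwa [this] at h2
  have hU₀rank : finrank F (span F (Set.range e)) = k := by
    rw [finrank_span_eq_card he, Fintype.card_fin]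
  have hVrank : finrank F (span F (Set.range M)) = k := by
    exact (Matrix.rank_eq_finrank_span_row M).symm.trans hM
  -- U₀ is the kernel of the projection onto the last coordinates
  have hker : span F (Set.range e) = LinearMap.ker π := by
    apply le_antisymm
    · rw [Submodule.span_le]
      rintro _ ⟨i, rfl⟩
      simp only [SetLike.mem_coe, LinearMap.mem_ker]
      funext s
      have hne : (s.val : Fin n) ≠ Fin.castLE hkn i := by
        intro h
        have h1 := s.2
        have h2 : ((Fin.castLE hkn i : Fin n) : ℕ) = (i : ℕ) := rfl
        have h3 : ((s.val : Fin n) : ℕ) = (i : ℕ) := by rw [h, h2]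
        have := i.2; omega
      simp [hπ_def, LinearMap.funLeft_apply, he_def, Pi.single_apply, if_neg hne]
    · intro x hx
      have hx' : ∀ i : Fin n, k ≤ (i : ℕ) → x i = 0 := by
        intro i hi
        have h0 : π x = 0 := LinearMap.mem_ker.mp hx
        have := congrFun h0 ⟨i, hi⟩
        simpa [hπ_def, LinearMap.funLeft_apply] using this
      have hxsum : x = ∑ j : Fin n, x j • (Pi.single j (1 : F) : Fin n → F) := by
        funext i
        rw [Finset.sum_apply]
        simp [Pi.single_apply]
      rw [hxsum]
      refine Submodule.sum_mem _ fun j _ => ?_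
      by_cases hj : (j : ℕ) < k
      · refine Submodule.smul_mem _ _ (Submodule.subset_span ⟨⟨(j : ℕ), hj⟩, ?_⟩)
        simp only [he_def]
        congr 1
      · rw [hx' j (not_lt.mp hj)]; simp
  -- rank-nullity computation
  have key : finrank F ↥(span F (Set.range e) ⊓ span F (Set.range M)) + B.rank = k := by
    set W := span F (Set.range M) with hW_def
    set f : ↥W →ₗ[F] ({i : Fin n // k ≤ (i : ℕ)} → F) := π.comp W.subtype with hf_def
    have h1 : finrank F (LinearMap.range f) + finrank F (LinearMap.ker f) = finrank F ↥W :=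
      LinearMap.finrank_range_add_finrank_ker f
    have hkerf : finrank F (LinearMap.ker f) =
        finrank F ↥(span F (Set.range e) ⊓ W) := by
      have h2 : LinearMap.ker f = Submodule.comap W.subtype (span F (Set.range e)) := by
        rw [hf_def, LinearMap.ker_comp, hker]
      rw [h2, ← Submodule.finrank_map_subtype_eq W, Submodule.map_comap_subtype, inf_comm]
    have hrangef : finrank F (LinearMap.range f) = B.rank := by
      have h3 : LinearMap.range f = span F (Set.range B) := by
        rw [hf_def, LinearMap.range_comp, Submodule.range_subtype, hW_def,
          Submodule.map_span, show Set.range M = Set.range M.row from rfl, ← Set.range_comp]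
        rfl
      rw [h3, Matrix.rank_eq_finrank_span_row]; rfl
    rw [hkerf, hrangef] at h1
    omega
  have hmax : max (finrank F ↥(span F (Set.range e)))
      (finrank F ↥(span F (Set.range M))) = k := by rw [hU₀rank, hVrank, max_self]
  rw [hmax]
  have hinterle : finrank F ↥(span F (Set.range e) ⊓ span F (Set.range M)) ≤ k := by omega
  constructor
  · -- B.rank ≤ t → minors vanish
    intro hle ι hmono hcard
    have hrank : B.rank ≤ t := by omega
    by_contra hdet
    have hA : IsUnit (M.submatrix id ι) :=
      (Matrix.isUnit_iff_isUnit_det _).mpr (isUnit_iff_ne_zero.mpr hdet)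
    have hcols : LinearIndependent F (fun j => (M.submatrix id ι)ᵀ j) :=
      Matrix.linearIndependent_cols_iff_isUnit.mpr hA
    set T : Finset (Fin k) := Finset.univ.filter (fun j : Fin k => ¬ ((ι j : ℕ) < k)) with hT_def
    have hTcard : t + 1 ≤ T.card := by
      rw [hT_def]
      have := Finset.card_filter_add_card_filter_not
        (s := (Finset.univ : Finset (Fin k))) (p := fun j : Fin k => (ι j : ℕ) < k)
      rw [Finset.card_univ, Fintype.card_fin] at this
      omega
    have hsub : LinearIndependent F (fun j : T => Mᵀ (ι j)) :=
      hcols.comp (fun j : T => (j : Fin k)) Subtype.val_injective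
    have hrange : ∀ j : T, Mᵀ (ι (j : Fin k)) ∈ span F (Set.range Bᵀ) := by
      intro j
      have hj : ¬ ((ι (j : Fin k) : ℕ) < k) := (Finset.mem_filter.mp j.2).2
      exact Submodule.subset_span ⟨⟨ι (j : Fin k), not_lt.mp hj⟩, rfl⟩
    have hcardle : T.card ≤ B.rank := by
      rw [Matrix.rank_eq_finrank_span_cols]
      calc T.card = finrank F (span F (Set.range fun j : T => Mᵀ (ι (j : Fin k)))) := by
            rw [finrank_span_eq_card hsub, Fintype.card_coe]
        _ ≤ finrank F (span F (Set.range Bᵀ)) :=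
            Submodule.finrank_mono (span_le.mpr (Set.range_subset_iff.mpr hrange))
    omega
  · -- minors vanish → B.rank ≤ t
    intro hmins
    suffices hsuff : B.rank ≤ t by omega
    by_contra hrank
    push_neg at hrank
    have htk : t < k := lt_of_lt_of_le hrank (by
      have := B.rank_le_card_height
      simpa using this)
    obtain ⟨b₀, hb₀sub, hb₀span, hb₀ind⟩ := exists_linearIndependent F (Set.range Bᵀ)
    have hb₀fin : b₀.Finite := hb₀ind.set_finite_of_isNoetherian
    haveI := hb₀fin.fintype
    have hb₀card : t + 1 ≤ b₀.toFinset.card := by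
      rw [← finrank_span_set_eq_card hb₀ind, hb₀span, show Set.range Bᵀ = Set.range B.col from rfl, ← Matrix.rank_eq_finrank_span_cols]
      omega
    have hBM : Set.range Bᵀ ⊆ Set.range Mᵀ := by
      rintro _ ⟨s, rfl⟩; exact ⟨s.val, rfl⟩
    have hb₀M : b₀ ⊆ Set.range Mᵀ := hb₀sub.trans hBM
    set b := (show LinearIndepOn F id b₀ from hb₀ind).extend hb₀M with hb_def
    have hbsub : b ⊆ Set.range Mᵀ := (show LinearIndepOn F id b₀ from hb₀ind).extend_subset hb₀M
    have hb₀b : b₀ ⊆ b := (show LinearIndepOn F id b₀ from hb₀ind).subset_extend hb₀M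
    have hbspan : Set.range Mᵀ ⊆ ↑(span F b) := (show LinearIndepOn F id b₀ from hb₀ind).subset_span_extend hb₀M
    have hbind : LinearIndependent F ((↑) : b → (Fin k → F)) :=
      (show LinearIndepOn F id b₀ from hb₀ind).linearIndepOn_extend hb₀M
    have hMspan : span F (Set.range Mᵀ) = ⊤ := by
      apply Submodule.eq_top_of_finrank_eq
      rw [show Set.range Mᵀ = Set.range M.col from rfl, ← Matrix.rank_eq_finrank_span_cols, hM, Module.finrank_pi, Fintype.card_fin]
    have hbtop : span F b = ⊤ := by
      apply le_antisymm le_top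
      rw [← hMspan]
      exact span_le.mpr hbspan
    have hbfin : b.Finite := hbind.set_finite_of_isNoetherian
    haveI := hbfin.fintype
    have hbcard : b.toFinset.card = k := by
      rw [← finrank_span_set_eq_card hbind, hbtop, finrank_top, Module.finrank_pi,
        Fintype.card_fin]
    -- choose indices
    have hchoice : ∀ v ∈ b, ∃ i : Fin n, Mᵀ i = v ∧ (v ∈ b₀ → k ≤ (i : ℕ)) := by
      intro v hv
      by_cases h0 : v ∈ b₀
      · obtain ⟨s, hs⟩ := hb₀sub h0
        exact ⟨s.val, hs, fun _ => s.2⟩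
      · obtain ⟨i, hi⟩ := hbsub hv
        exact ⟨i, hi, fun h => absurd h h0⟩
    choose idx hidx1 hidx2 using hchoice
    set bF : Finset (Fin k → F) := b.toFinset with hbF_def
    have hmem_bF : ∀ v : {x // x ∈ bF}, v.val ∈ b := fun v => Set.mem_toFinset.mp v.2
    set I : Finset (Fin n) := bF.attach.image (fun v => idx v.val (hmem_bF v)) with hI_def
    have hIcard : I.card = k := by
      rw [hI_def, Finset.card_image_of_injective _ ?_, Finset.card_attach, hbcard]
      intro v1 v2 h
      have h' : idx v1.val (hmem_bF v1) = idx v2.val (hmem_bF v2) := h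
      apply Subtype.ext
      rw [← hidx1 v1.val (hmem_bF v1), ← hidx1 v2.val (hmem_bF v2), h']
    set σ := I.orderEmbOfFin hIcard with hσ_def
    set ι' : Fin k → Fin n := fun j => σ j with hι'_def
    have hι'mono : StrictMono ι' := σ.strictMono
    have hι'mem : ∀ j, ι' j ∈ I := fun j => I.orderEmbOfFin_mem hIcard j
    -- every index in I carries a column in b, and Mᵀ is injective on I
    have hIcol : ∀ i ∈ I, Mᵀ i ∈ b := by
      intro i hi
      obtain ⟨v, _, rfl⟩ := Finset.mem_image.mp hi
      rw [hidx1]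
      exact hmem_bF v
    have hMinj : ∀ i₁ ∈ I, ∀ i₂ ∈ I, Mᵀ i₁ = Mᵀ i₂ → i₁ = i₂ := by
      intro i₁ hi₁ i₂ hi₂ h
      obtain ⟨v₁, _, rfl⟩ := Finset.mem_image.mp hi₁
      obtain ⟨v₂, _, rfl⟩ := Finset.mem_image.mp hi₂
      rw [hidx1, hidx1] at h
      exact congrArg (fun v : {x // x ∈ bF} => idx v.val (hmem_bF v)) (Subtype.ext h)
    -- columns of the submatrix are independent
    have hdet : (M.submatrix id ι').det ≠ 0 := by
      have hmem : ∀ j : Fin k, Mᵀ (ι' j) ∈ b := fun j => hIcol _ (hι'mem j)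
      set g : Fin k → b := fun j => ⟨Mᵀ (ι' j), hmem j⟩ with hg_def
      have hginj : Function.Injective g := by
        intro j1 j2 h
        have h' : Mᵀ (ι' j1) = Mᵀ (ι' j2) := congrArg Subtype.val h
        have := hMinj _ (hι'mem j1) _ (hι'mem j2) h'
        exact σ.injective this
      have hind : LinearIndependent F (fun j => (M.submatrix id ι')ᵀ j) :=
        hbind.comp g hginj
      intro h0
      have : IsUnit (M.submatrix id ι') :=
        Matrix.linearIndependent_cols_iff_isUnit.mp hind
      rw [Matrix.isUnit_iff_isUnit_det, h0] at this
      exact not_isUnit_zero this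
    -- the counting condition
    apply hdet
    apply hmins ι' hι'mono
    -- count: at least t+1 of the ι' j have index ≥ k
    have hsplit := Finset.card_filter_add_card_filter_not
      (s := (Finset.univ : Finset (Fin k))) (p := fun j : Fin k => (ι' j : ℕ) < k)
    rw [Finset.card_univ, Fintype.card_fin] at hsplit
    have hpre : ∀ i ∈ I, ∃ j : Fin k, ι' j = i := by
      intro i hi
      have hr := I.range_orderEmbOfFin hIcard
      have : i ∈ Set.range σ := by rw [hr]; exact_mod_cast hi
      obtain ⟨j, hj⟩ := this
      exact ⟨j, hj⟩
    choose pre hpre' using hpre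
    have hQ : t + 1 ≤ (Finset.univ.filter fun j : Fin k => ¬ ((ι' j : ℕ) < k)).card := by
      have hmem0 : ∀ v : {x // x ∈ b₀.toFinset}, v.val ∈ b :=
        fun v => hb₀b (Set.mem_toFinset.mp v.2)
      have hmemI : ∀ v : {x // x ∈ b₀.toFinset}, idx v.val (hmem0 v) ∈ I :=
        fun v => Finset.mem_image.mpr
          ⟨⟨v.val, Set.mem_toFinset.mpr (hmem0 v)⟩, Finset.mem_attach _ _, rfl⟩
      set φ : {x // x ∈ b₀.toFinset} → Fin k :=
        fun v => pre (idx v.val (hmem0 v)) (hmemI v) with hφ_def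
      have hφmem : ∀ v, φ v ∈ Finset.univ.filter fun j : Fin k => ¬ ((ι' j : ℕ) < k) := by
        intro v
        simp only [Finset.mem_filter, Finset.mem_univ, true_and, not_lt, hφ_def]
        rw [hpre']
        exact hidx2 _ _ (Set.mem_toFinset.mp v.2)
      have hφinj : Function.Injective φ := by
        intro v1 v2 h
        have h1 : ι' (φ v1) = idx v1.val (hmem0 v1) := hpre' _ _
        have h2 : ι' (φ v2) = idx v2.val (hmem0 v2) := hpre' _ _
        rw [h] at h1
        have hidxeq : idx v1.val (hmem0 v1) = idx v2.val (hmem0 v2) := by rw [← h1, ← h2]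
        have hv : v1.val = v2.val := by
          rw [← hidx1 v1.val (hmem0 v1), hidxeq, hidx1]
        exact Subtype.ext hv
      calc t + 1 ≤ b₀.toFinset.card := hb₀card
        _ = b₀.toFinset.attach.card := Finset.card_attach.symm
        _ ≤ _ := Finset.card_le_card_of_injOn φ (fun a _ => hφmem a) hφinj.injOn
    omega
end

section
/- Over the binary field F_2, let U_1, U_2, U_3, U_4 be the 2-dimensional subspaces of F_2^4 given as the row spaces of the matrices [[1,0,0,0],[0,1,0,0]], [[0,0,1,0],[0,0,0,1]], [[1,1,0,1],[0,1,1,1]], and [[1,1,1,0],[1,0,1,1]] respectively. Then there exists no 2-dimensional subspace V of F_2^4 with V ∩ U_i ≠ {0} for all i = 1, 2, 3, 4. -/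
lemma span_pair_disj (a b c d : Fin 4 → ZMod 2)
    (h : ∀ p q r s : ZMod 2, p • a + q • b = r • c + s • d → p • a + q • b = 0) :
    ∀ v : Fin 4 → ZMod 2, v ∈ Submodule.span (ZMod 2) {a, b} →
      v ∈ Submodule.span (ZMod 2) {c, d} → v = 0 := by
  intro v hv hw
  rw [Submodule.mem_span_pair] at hv hw
  obtain ⟨p, q, hpq⟩ := hv
  obtain ⟨r, s, hrs⟩ := hw
  subst hpq
  exact h p q r s hrs.symm

/-- Over `F_2`, there is no 2-dimensional subspace (line in `ℙ^3`) of `F_2^4` intersecting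
all four of the given 2-dimensional subspaces nontrivially. -/
theorem no_common_transversal_over_F2 :
    ¬ ∃ V : Submodule (ZMod 2) (Fin 4 → ZMod 2),
      Module.finrank (ZMod 2) ↥V = 2 ∧
      V ⊓ Submodule.span (ZMod 2)
        ({![1,0,0,0], ![0,1,0,0]} : Set (Fin 4 → ZMod 2)) ≠ ⊥ ∧
      V ⊓ Submodule.span (ZMod 2)
        ({![0,0,1,0], ![0,0,0,1]} : Set (Fin 4 → ZMod 2)) ≠ ⊥ ∧
      V ⊓ Submodule.span (ZMod 2)
        ({![1,1,0,1], ![0,1,1,1]} : Set (Fin 4 → ZMod 2)) ≠ ⊥ ∧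
      V ⊓ Submodule.span (ZMod 2)
        ({![1,1,1,0], ![1,0,1,1]} : Set (Fin 4 → ZMod 2)) ≠ ⊥ := by
  rintro ⟨V, hrank, h1, h2, h3, h4⟩
  rw [Submodule.ne_bot_iff] at h1 h2 h3 h4
  obtain ⟨v1, ⟨hv1V, hv1U⟩, hn1⟩ := h1
  obtain ⟨v2, ⟨hv2V, hv2U⟩, hn2⟩ := h2
  obtain ⟨v3, ⟨hv3V, hv3U⟩, hn3⟩ := h3
  obtain ⟨v4, ⟨hv4V, hv4U⟩, hn4⟩ := h4
  have d12 := span_pair_disj ![1,0,0,0] ![0,1,0,0] ![0,0,1,0] ![0,0,0,1] (by decide)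
  have d13 := span_pair_disj ![1,0,0,0] ![0,1,0,0] ![1,1,0,1] ![0,1,1,1] (by decide)
  have d23 := span_pair_disj ![0,0,1,0] ![0,0,0,1] ![1,1,0,1] ![0,1,1,1] (by decide)
  have d14 := span_pair_disj ![1,0,0,0] ![0,1,0,0] ![1,1,1,0] ![1,0,1,1] (by decide)
  have d24 := span_pair_disj ![0,0,1,0] ![0,0,0,1] ![1,1,1,0] ![1,0,1,1] (by decide)
  have d34 := span_pair_disj ![1,1,0,1] ![0,1,1,1] ![1,1,1,0] ![1,0,1,1] (by decide)
  have n12 : v1 ≠ v2 := fun h => hn1 (d12 v1 hv1U (h ▸ hv2U))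
  have n13 : v1 ≠ v3 := fun h => hn1 (d13 v1 hv1U (h ▸ hv3U))
  have n14 : v1 ≠ v4 := fun h => hn1 (d14 v1 hv1U (h ▸ hv4U))
  have n23 : v2 ≠ v3 := fun h => hn2 (d23 v2 hv2U (h ▸ hv3U))
  have n24 : v2 ≠ v4 := fun h => hn2 (d24 v2 hv2U (h ▸ hv4U))
  have n34 : v3 ≠ v4 := fun h => hn3 (d34 v3 hv3U (h ▸ hv4U))
  have hneg : ∀ w : Fin 4 → ZMod 2, -w = w := by
    intro w
    have h1 : (-1 : ZMod 2) = 1 := by decide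
    rw [← neg_one_smul (ZMod 2) w, h1, one_smul]
  -- v1, v2 are linearly independent
  have hind : LinearIndependent (ZMod 2) ![v1, v2] := by
    rw [LinearIndependent.pair_iff]
    intro s t hst
    fin_cases s <;> fin_cases t
    · exact ⟨rfl, rfl⟩
    · exact absurd (by simpa using (show (0:ZMod 2) • v1 + (1:ZMod 2) • v2 = 0 from hst)) hn2
    · exact absurd (by simpa using (show (1:ZMod 2) • v1 + (0:ZMod 2) • v2 = 0 from hst)) hn1
    · exfalso
      apply n12
      have h12 : v1 + v2 = 0 := by simpa using (show (1:ZMod 2) • v1 + (1:ZMod 2) • v2 = 0 from hst)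
      have : v1 = -v2 := eq_neg_of_add_eq_zero_left h12
      rwa [hneg] at this
  have hle : Submodule.span (ZMod 2) {v1, v2} ≤ V := by
    rw [Submodule.span_le, Set.insert_subset_iff, Set.singleton_subset_iff]
    exact ⟨hv1V, hv2V⟩
  have hspanrank : Module.finrank (ZMod 2) (Submodule.span (ZMod 2) {v1, v2}) = 2 := by
    have h := finrank_span_eq_card hind
    have hr : Set.range ![v1, v2] = {v1, v2} := by
      ext x; simp [Fin.exists_fin_two, or_comm]
    rw [hr] at h
    simpa using h
  have heq : Submodule.span (ZMod 2) {v1, v2} = V :=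
    Submodule.eq_of_le_of_finrank_eq hle (by rw [hspanrank, hrank])
  have key : ∀ w : Fin 4 → ZMod 2, w ∈ V → w ≠ 0 → w ≠ v1 → w ≠ v2 → w = v1 + v2 := by
    intro w hwV hw0 hw1 hw2
    have hw : w ∈ Submodule.span (ZMod 2) {v1, v2} := heq ▸ hwV
    rw [Submodule.mem_span_pair] at hw
    obtain ⟨a, b, hab⟩ := hw
    fin_cases a <;> fin_cases b
    · exact absurd (by simpa using (show w = (0:ZMod 2) • v1 + (0:ZMod 2) • v2 from hab.symm)) hw0
    · exact absurd (by simpa using (show w = (0:ZMod 2) • v1 + (1:ZMod 2) • v2 from hab.symm)) hw2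
    · exact absurd (by simpa using (show w = (1:ZMod 2) • v1 + (0:ZMod 2) • v2 from hab.symm)) hw1
    · have : v1 + v2 = w := by simpa using (show (1:ZMod 2) • v1 + (1:ZMod 2) • v2 = w from hab)
      exact this.symm
  have e3 : v3 = v1 + v2 := key v3 hv3V hn3 (Ne.symm n13) (Ne.symm n23)
  have e4 : v4 = v1 + v2 := key v4 hv4V hn4 (Ne.symm n14) (Ne.symm n24)
  exact n34 (e3.trans e4.symm)
end

section
/- Let F be an algebraically closed field containing F_2, and let U_1, U_2, U_3, U_4 be the 2-dimensional subspaces of F^4 spanned by the rows of the matrices [[1,0,0,0],[0,1,0,0]], [[0,0,1,0],[0,0,0,1]], [[1,1,0,1],[0,1,1,1]], and [[1,1,1,0],[1,0,1,1]] respectively. Then there exist exactly two 2-dimensional subspaces V of F^4 with V ∩ U_i ≠ {0} for all i = 1, 2, 3, 4. -/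
open Submodule Module

section Aux

variable {F : Type*} [Field F]

private lemma mem_U1_iff (v : Fin 4 → F) :
    v ∈ Submodule.span F ({![1,0,0,0], ![0,1,0,0]} : Set (Fin 4 → F)) ↔ v 2 = 0 ∧ v 3 = 0 := by
  rw [Submodule.mem_span_pair]
  constructor
  · rintro ⟨s, r, rfl⟩
    constructor <;> simp
  · rintro ⟨h2, h3⟩
    exact ⟨v 0, v 1, by funext i; fin_cases i <;> simp_all⟩

private lemma mem_U2_iff (v : Fin 4 → F) :
    v ∈ Submodule.span F ({![0,0,1,0], ![0,0,0,1]} : Set (Fin 4 → F)) ↔ v 0 = 0 ∧ v 1 = 0 := by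
  rw [Submodule.mem_span_pair]
  constructor
  · rintro ⟨s, r, rfl⟩
    constructor <;> simp
  · rintro ⟨h2, h3⟩
    exact ⟨v 2, v 3, by funext i; fin_cases i <;> simp_all⟩

private lemma mem_U3_iff (v : Fin 4 → F) :
    v ∈ Submodule.span F ({![1,1,0,1], ![0,1,1,1]} : Set (Fin 4 → F)) ↔
      v 1 = v 0 + v 2 ∧ v 3 = v 0 + v 2 := by
  rw [Submodule.mem_span_pair]
  constructor
  · rintro ⟨s, r, rfl⟩
    constructor <;> simp
  · rintro ⟨h2, h3⟩
    exact ⟨v 0, v 2, by funext i; fin_cases i <;> simp_all⟩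

private lemma mem_U4_iff (v : Fin 4 → F) :
    v ∈ Submodule.span F ({![1,1,1,0], ![1,0,1,1]} : Set (Fin 4 → F)) ↔
      v 0 = v 2 ∧ v 1 + v 3 = v 0 := by
  rw [Submodule.mem_span_pair]
  constructor
  · rintro ⟨s, r, rfl⟩
    constructor <;> simp
  · rintro ⟨h2, h3⟩
    exact ⟨v 1, v 3, by funext i; fin_cases i <;> simp_all⟩

private lemma mem_Vt_iff (t : F) (v : Fin 4 → F) :
    v ∈ Submodule.span F ({![1,t,0,0], ![0,0,t,1]} : Set (Fin 4 → F)) ↔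
      v 1 = t * v 0 ∧ v 2 = t * v 3 := by
  rw [Submodule.mem_span_pair]
  constructor
  · rintro ⟨s, r, rfl⟩
    constructor <;> simp [mul_comm]
  · rintro ⟨h2, h3⟩
    exact ⟨v 0, v 3, by funext i; fin_cases i <;> simp_all [mul_comm]⟩

private lemma finrank_span_pair' {u w : Fin 4 → F} (h : LinearIndependent F ![u, w]) :
    finrank F (span F ({u, w} : Set (Fin 4 → F))) = 2 := by
  have := finrank_span_eq_card h
  rwa [Matrix.range_cons_cons_empty, Fintype.card_fin] at this

private lemma indep_Vt (t : F) :
    LinearIndependent F ![(![1,t,0,0] : Fin 4 → F), ![0,0,t,1]] := by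
  rw [LinearIndependent.pair_iff]
  intro s r hsr
  exact ⟨by simpa using congrFun hsr 0, by simpa using congrFun hsr 3⟩

private lemma Vt_inj {t s : F}
    (h : span F ({![1,t,0,0], ![0,0,t,1]} : Set (Fin 4 → F)) =
      span F ({![1,s,0,0], ![0,0,s,1]} : Set (Fin 4 → F))) : t = s := by
  have : (![1,t,0,0] : Fin 4 → F) ∈
      span F ({![1,s,0,0], ![0,0,s,1]} : Set (Fin 4 → F)) := h ▸ subset_span (by simp)
  rw [mem_Vt_iff] at this
  simpa using this.1

private lemma Vt_mem [CharP F 2] {t : F} (ht : t^2 + t + 1 = 0) :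
    Module.finrank F ↥(span F ({![1,t,0,0], ![0,0,t,1]} : Set (Fin 4 → F))) = 2 ∧
    span F ({![1,t,0,0], ![0,0,t,1]} : Set (Fin 4 → F)) ⊓
      Submodule.span F ({![1,0,0,0], ![0,1,0,0]} : Set (Fin 4 → F)) ≠ ⊥ ∧
    span F ({![1,t,0,0], ![0,0,t,1]} : Set (Fin 4 → F)) ⊓
      Submodule.span F ({![0,0,1,0], ![0,0,0,1]} : Set (Fin 4 → F)) ≠ ⊥ ∧
    span F ({![1,t,0,0], ![0,0,t,1]} : Set (Fin 4 → F)) ⊓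
      Submodule.span F ({![1,1,0,1], ![0,1,1,1]} : Set (Fin 4 → F)) ≠ ⊥ ∧
    span F ({![1,t,0,0], ![0,0,t,1]} : Set (Fin 4 → F)) ⊓
      Submodule.span F ({![1,1,1,0], ![1,0,1,1]} : Set (Fin 4 → F)) ≠ ⊥ := by
  have htwo : (2 : F) = 0 := by exact_mod_cast CharP.cast_eq_zero F 2
  refine ⟨finrank_span_pair' (indep_Vt t), ?_, ?_, ?_, ?_⟩
  · rw [Submodule.ne_bot_iff]
    refine ⟨![1,t,0,0], Submodule.mem_inf.2 ⟨subset_span (by simp), (mem_U1_iff _).2 ⟨rfl, rfl⟩⟩,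
      fun h => ?_⟩
    simpa using congrFun h 0
  · rw [Submodule.ne_bot_iff]
    refine ⟨![0,0,t,1], Submodule.mem_inf.2 ⟨subset_span (by simp), (mem_U2_iff _).2 ⟨rfl, rfl⟩⟩,
      fun h => ?_⟩
    simpa using congrFun h 3
  · rw [Submodule.ne_bot_iff]
    refine ⟨![1, t, t*t, t], Submodule.mem_inf.2 ⟨?_, ?_⟩, fun h => ?_⟩
    · rw [mem_Vt_iff]
      constructor <;> simp
    · rw [mem_U3_iff]
      constructor <;> · show t = 1 + t*t; linear_combination -ht + t*htwo
    · simpa using congrFun h 0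
  · rw [Submodule.ne_bot_iff]
    refine ⟨![t, t*t, t, 1], Submodule.mem_inf.2 ⟨?_, ?_⟩, fun h => ?_⟩
    · rw [mem_Vt_iff]
      constructor <;> simp
    · rw [mem_U4_iff]
      refine ⟨rfl, ?_⟩
      show t*t + 1 = t
      linear_combination -ht + (t*t+1)*htwo
    · simpa using congrFun h 3

end Aux

/-- Over an algebraically closed field of characteristic 2 (containing `F_2`), there are
exactly two 2-dimensional subspaces of `F^4` intersecting all four of the given
2-dimensional subspaces nontrivially, as predicted by Schubert calculus (`d(2,2) = 2`). -/
theorem exactly_two_common_transversals_over_algebraic_closure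
    {F : Type*} [Field F] [IsAlgClosed F] [CharP F 2] :
    {V : Submodule F (Fin 4 → F) |
      Module.finrank F ↥V = 2 ∧
      V ⊓ Submodule.span F ({![1,0,0,0], ![0,1,0,0]} : Set (Fin 4 → F)) ≠ ⊥ ∧
      V ⊓ Submodule.span F ({![0,0,1,0], ![0,0,0,1]} : Set (Fin 4 → F)) ≠ ⊥ ∧
      V ⊓ Submodule.span F ({![1,1,0,1], ![0,1,1,1]} : Set (Fin 4 → F)) ≠ ⊥ ∧
      V ⊓ Submodule.span F ({![1,1,1,0], ![1,0,1,1]} : Set (Fin 4 → F)) ≠ ⊥}.ncard = 2 := by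
  obtain ⟨ω, hω⟩ : ∃ ω : F, ω^2 + ω + 1 = 0 := by
    obtain ⟨ω, hω⟩ := IsAlgClosed.exists_root (Polynomial.X^2 + Polynomial.X + 1 : Polynomial F)
      (by intro h
          have : (Polynomial.X^2 + Polynomial.X + 1 : Polynomial F).degree = 2 := by
            compute_degree!
          rw [h] at this; simp at this)
    exact ⟨ω, by simpa [Polynomial.IsRoot] using hω⟩
  have htwo : (2 : F) = 0 := by exact_mod_cast CharP.cast_eq_zero F 2
  have hω' : (ω+1)^2 + (ω+1) + 1 = 0 := by linear_combination hω + (ω+1)*htwo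
  have hset : {V : Submodule F (Fin 4 → F) |
      Module.finrank F ↥V = 2 ∧
      V ⊓ Submodule.span F ({![1,0,0,0], ![0,1,0,0]} : Set (Fin 4 → F)) ≠ ⊥ ∧
      V ⊓ Submodule.span F ({![0,0,1,0], ![0,0,0,1]} : Set (Fin 4 → F)) ≠ ⊥ ∧
      V ⊓ Submodule.span F ({![1,1,0,1], ![0,1,1,1]} : Set (Fin 4 → F)) ≠ ⊥ ∧
      V ⊓ Submodule.span F ({![1,1,1,0], ![1,0,1,1]} : Set (Fin 4 → F)) ≠ ⊥} =
      {span F ({![1,ω,0,0], ![0,0,ω,1]} : Set (Fin 4 → F)),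
       span F ({![1,ω+1,0,0], ![0,0,ω+1,1]} : Set (Fin 4 → F))} := by
    ext V
    simp only [Set.mem_setOf_eq, Set.mem_insert_iff, Set.mem_singleton_iff]
    constructor
    · rintro ⟨hV, h1, h2, h3, h4⟩
      rw [Submodule.ne_bot_iff] at h1 h2 h3 h4
      obtain ⟨u, hu, hu0⟩ := h1
      obtain ⟨huV, huU1⟩ := Submodule.mem_inf.1 hu
      rw [mem_U1_iff] at huU1
      obtain ⟨w, hw, hw0⟩ := h2
      obtain ⟨hwV, hwU2⟩ := Submodule.mem_inf.1 hw
      rw [mem_U2_iff] at hwU2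
      have hu01 : ¬ (u 0 = 0 ∧ u 1 = 0) := by
        rintro ⟨ha, hb⟩
        refine hu0 (funext fun i => ?_)
        fin_cases i
        exacts [ha, hb, huU1.1, huU1.2]
      have hw23 : ¬ (w 2 = 0 ∧ w 3 = 0) := by
        rintro ⟨hc, hd⟩
        refine hw0 (funext fun i => ?_)
        fin_cases i
        exacts [hwU2.1, hwU2.2, hc, hd]
      have hind : LinearIndependent F ![u, w] := by
        rw [LinearIndependent.pair_iff]
        intro s r hsr
        have e0 := congrFun hsr 0
        have e1 := congrFun hsr 1
        have e2 := congrFun hsr 2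
        have e3 := congrFun hsr 3
        simp only [Pi.add_apply, Pi.smul_apply, smul_eq_mul, Pi.zero_apply,
          huU1.1, huU1.2, hwU2.1, hwU2.2, mul_zero, add_zero, zero_add] at e0 e1 e2 e3
        constructor
        · rcases mul_eq_zero.1 e0 with h | h
          · exact h
          rcases mul_eq_zero.1 e1 with h' | h'
          · exact h'
          exact absurd ⟨h, h'⟩ hu01
        · rcases mul_eq_zero.1 e2 with h | h
          · exact h
          rcases mul_eq_zero.1 e3 with h' | h'
          · exact h'
          exact absurd ⟨h, h'⟩ hw23
      have hVspan : V = span F ({u, w} : Set (Fin 4 → F)) := by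
        have hle : span F ({u, w} : Set (Fin 4 → F)) ≤ V := by
          rw [span_le]; rintro x (rfl | rfl) <;> simpa
        exact (Submodule.eq_of_le_of_finrank_eq hle (by rw [finrank_span_pair' hind, hV])).symm
      -- U3 condition
      obtain ⟨x, hx, hx0⟩ := h3
      obtain ⟨hxV, hxU3⟩ := Submodule.mem_inf.1 hx
      rw [hVspan, Submodule.mem_span_pair] at hxV
      obtain ⟨α, β, rfl⟩ := hxV
      rw [mem_U3_iff] at hxU3
      simp only [Pi.add_apply, Pi.smul_apply, smul_eq_mul,
        huU1.1, huU1.2, hwU2.1, hwU2.2, mul_zero, add_zero, zero_add] at hxU3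
      obtain ⟨eA, eB⟩ := hxU3
      -- eA : α * u 1 = α * u 0 + β * w 2 ; eB : β * w 3 = α * u 0 + β * w 2
      have hα : α ≠ 0 := by
        rintro rfl
        have h2' : β * w 2 = 0 := by linear_combination -eA
        have h3' : β * w 3 = 0 := by linear_combination eB + h2'
        apply hx0
        funext i
        fin_cases i
        · show (0:F) * u 0 + β * w 0 = 0
          linear_combination β * hwU2.1
        · show (0:F) * u 1 + β * w 1 = 0
          linear_combination β * hwU2.2
        · show (0:F) * u 2 + β * w 2 = 0
          linear_combination h2'
        · show (0:F) * u 3 + β * w 3 = 0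
          linear_combination h3'
      have hβ : β ≠ 0 := by
        rintro rfl
        have ha0 : u 0 = 0 := by
          rcases mul_eq_zero.1 (show α * u 0 = 0 by linear_combination -eB) with h | h
          · exact absurd h hα
          · exact h
        have hb0 : u 1 = 0 := by
          rcases mul_eq_zero.1 (show α * u 1 = 0 by linear_combination eA + α * ha0) with h | h
          · exact absurd h hα
          · exact h
        exact hu01 ⟨ha0, hb0⟩
      -- U4 condition
      obtain ⟨y, hy, hy0⟩ := h4
      obtain ⟨hyV, hyU4⟩ := Submodule.mem_inf.1 hy
      rw [hVspan, Submodule.mem_span_pair] at hyV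
      obtain ⟨γ, δ, rfl⟩ := hyV
      rw [mem_U4_iff] at hyU4
      simp only [Pi.add_apply, Pi.smul_apply, smul_eq_mul,
        huU1.1, huU1.2, hwU2.1, hwU2.2, mul_zero, add_zero, zero_add] at hyU4
      obtain ⟨eC, eD⟩ := hyU4
      -- eC : γ * u 0 = δ * w 2 ; eD : γ * u 1 + δ * w 3 = γ * u 0
      have hγ : γ ≠ 0 := by
        rintro rfl
        have h2' : δ * w 2 = 0 := by linear_combination -eC
        have h3' : δ * w 3 = 0 := by linear_combination eD
        apply hy0
        funext i
        fin_cases i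
        · show (0:F) * u 0 + δ * w 0 = 0
          linear_combination δ * hwU2.1
        · show (0:F) * u 1 + δ * w 1 = 0
          linear_combination δ * hwU2.2
        · show (0:F) * u 2 + δ * w 2 = 0
          linear_combination h2'
        · show (0:F) * u 3 + δ * w 3 = 0
          linear_combination h3'
      have hδ : δ ≠ 0 := by
        rintro rfl
        have ha0 : u 0 = 0 := by
          rcases mul_eq_zero.1 (show γ * u 0 = 0 by linear_combination eC) with h | h
          · exact absurd h hγ
          · exact h
        have hb0 : u 1 = 0 := by
          rcases mul_eq_zero.1 (show γ * u 1 = 0 by linear_combination eD + γ * ha0) with h | h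
          · exact absurd h hγ
          · exact h
        exact hu01 ⟨ha0, hb0⟩
      -- nonvanishing of key coordinates
      have hd : w 3 ≠ 0 := by
        intro hd0
        have hb0 : u 1 = 0 := by
          rcases mul_eq_zero.1 (show α * u 1 = 0 by linear_combination eA - eB + β * hd0) with
            h | h
          · exact absurd h hα
          · exact h
        have ha0 : u 0 = 0 := by
          rcases mul_eq_zero.1
              (show γ * u 0 = 0 by linear_combination -eD + γ * hb0 + δ * hd0) with h | h
          · exact absurd h hγ
          · exact h
        exact hu01 ⟨ha0, hb0⟩
      have ha : u 0 ≠ 0 := by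
        intro ha0
        have hc0 : w 2 = 0 := by
          rcases mul_eq_zero.1 (show δ * w 2 = 0 by linear_combination -eC + γ * ha0) with h | h
          · exact absurd h hδ
          · exact h
        have hb0 : u 1 = 0 := by
          rcases mul_eq_zero.1
              (show α * u 1 = 0 by linear_combination eA + α * ha0 + β * hc0) with h | h
          · exact absurd h hα
          · exact h
        exact hu01 ⟨ha0, hb0⟩
      -- derive the algebraic relations
      have eE : α * u 1 = β * w 3 := by linear_combination eA - eB
      have k1 : γ * (u 1 * w 2 + u 0 * w 3) = γ * (u 0 * w 2) := by
        linear_combination w 2 * eD + w 3 * eC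
      have e1 := mul_left_cancel₀ hγ k1
      have k2 : α * (u 1 * w 3) = α * (u 0 * w 3 + u 1 * w 2) := by
        linear_combination w 3 * eA - w 2 * eE
      have e2 := mul_left_cancel₀ hα k2
      have eac : u 0 * w 2 = u 1 * w 3 := by linear_combination -e1 - e2
      have hE : w 3 * (u 0 * u 1) = w 3 * (u 0 ^ 2 + u 1 ^ 2) := by
        linear_combination u 0 * e2 + u 1 * eac
      have hE' := mul_left_cancel₀ hd hE
      set t : F := u 1 * (u 0)⁻¹ with htdef
      have htwo : (2 : F) = 0 := by exact_mod_cast CharP.cast_eq_zero F 2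
      have ht : t ^ 2 + t + 1 = 0 := by
        rw [htdef]
        field_simp
        linear_combination hE' + (u 0^2 + u 1^2) * htwo
      have hc : w 2 = t * w 3 := by
        rw [htdef]
        field_simp
        linear_combination eac
      have hVt : V = span F ({![1,t,0,0], ![0,0,t,1]} : Set (Fin 4 → F)) := by
        have hle : V ≤ span F ({![1,t,0,0], ![0,0,t,1]} : Set (Fin 4 → F)) := by
          rw [hVspan, span_le]
          rintro z (rfl | rfl)
          · rw [SetLike.mem_coe, mem_Vt_iff]
            refine ⟨?_, by simp [huU1.1, huU1.2]⟩
            rw [htdef]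
            field_simp
          · rw [SetLike.mem_coe, mem_Vt_iff]
            exact ⟨by simp [hwU2.1, hwU2.2], hc⟩
        exact Submodule.eq_of_le_of_finrank_eq hle
          (by rw [hV, finrank_span_pair' (indep_Vt t)])
      have : (t - ω) * (t - (ω + 1)) = 0 := by
        linear_combination ht - hω + (- t - t*ω - 1 + ω^2 + ω + 1) * htwo
      rcases mul_eq_zero.1 this with h | h
      · left; rw [hVt, sub_eq_zero.1 h]
      · right; rw [hVt, sub_eq_zero.1 h]
    · rintro (rfl | rfl)
      · exact Vt_mem hω
      · exact Vt_mem hω'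
  rw [hset]
  refine Set.ncard_pair fun h => ?_
  have := Vt_inj h
  simp at this
end
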